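/- Let P be a probabilistic transition system specification with a strict stratification S (i.e., a stratification in which also every proper closed instance of a positive premise lies in a strictly smaller stratum than the corresponding instance of the conclusion). Then →_{P,S} is the only supported model of P. -/

import Mathlib

open scoped ENNReal Classical

namespace PTSSpec

/-! ### Signatures and terms -/

structure Sig : Type 1 where
  F : Type
  ar : F → ℕ

variable {s : Sig} {M V A : Type}

/-- Terms over a signature with variables from `α`. -/
inductive Tm (s : Sig) (α : Type) : Type
  | var : α → Tm s α
  | app : (f : s.F) → (Fin (s.ar f) → Tm s α) → Tm s α

/-- Closed terms `T(Σ)`. -/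
abbrev CTm (s : Sig) : Type := Tm s Empty

def Tm.bind {α β : Type} (σ : α → Tm s β) : Tm s α → Tm s β
  | .var x => σ x
  | .app f ts => .app f fun i => (ts i).bind σ

def Tm.vars {α : Type} : Tm s α → Set α
  | .var x => {x}
  | .app _ ts => ⋃ i, (ts i).vars

/-- Embedding of closed terms into terms with variables. -/
def CTm.emb {α : Type} : CTm s → Tm s α := Tm.bind fun e => e.elim

/-! ### Distribution terms -/

/-- Distribution terms: distribution variables, instantiable Dirac distributions, and
nested convex combinations of products of distribution terms pushed forward along
functions `g : T(Σ)ⁿ → T(Σ)`. -/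
inductive DTm (s : Sig) (M V : Type) : Type 1
  | dvar : M → DTm s M V
  | dirac : Tm s V → DTm s M V
  | comb : (ι : Type) → (p : ι → ℝ≥0∞) → (n : ι → ℕ) →
      (g : (i : ι) → (Fin (n i) → CTm s) → CTm s) →
      (θ : (i : ι) → Fin (n i) → DTm s M V) →
      (∀ i, p i ≠ 0 ∧ p i ≤ 1) → (∑' i, p i = 1) → DTm s M V

def DTm.subst (σV : V → Tm s V) (σM : M → DTm s M V) : DTm s M V → DTm s M V
  | .dvar μ => σM μ
  | .dirac t => .dirac (t.bind σV)
  | .comb ι p n g θ h1 h2 => .comb ι p n g (fun i k => (θ i k).subst σV σM) h1 h2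

/-- Evaluation of a distribution term under a closed substitution, as a mass function
on closed terms. -/
noncomputable def DTm.eval (ρV : V → CTm s) (ρM : M → PMF (CTm s)) :
    DTm s M V → CTm s → ℝ≥0∞
  | .dvar μ => fun u => ρM μ u
  | .dirac t => fun u => if u = t.bind ρV then 1 else 0
  | .comb ι p n g θ _ _ => fun u =>
      ∑' i : ι, p i * ∑' v : Fin (n i) → CTm s,
        (if g i v = u then ∏ k, (θ i k).eval ρV ρM (v k) else 0)

def DTm.varsT : DTm s M V → Set V
  | .dvar _ => ∅
  | .dirac t => t.vars
  | .comb ι _ n _ θ _ _ => ⋃ i, ⋃ k, (θ i k).varsT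

def DTm.varsM : DTm s M V → Set M
  | .dvar μ => {μ}
  | .dirac _ => ∅
  | .comb ι _ n _ θ _ _ => ⋃ i, ⋃ k, (θ i k).varsM

def DTm.IsClosed (θ : DTm s M V) : Prop := θ.varsT = ∅ ∧ θ.varsM = ∅

/-- The mass that a mass function assigns to a set of closed terms. -/
noncomputable def massOf (f : CTm s → ℝ≥0∞) (T : Set (CTm s)) : ℝ≥0∞ := ∑' t : T, f t

/-! ### Literals, rules, substitutions -/

/-- Comparison operators for quantitative literals. -/
inductive CmpOp : Type
  | gt | ge | lt | le

def CmpOp.holds : CmpOp → ℝ≥0∞ → ℝ≥0∞ → Prop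
  | .gt, a, b => a > b
  | .ge, a, b => a ≥ b
  | .lt, a, b => a < b
  | .le, a, b => a ≤ b

/-- Literals: positive `t →a θ`, negative `t ↛a`, quantitative `θ(W) ⋈ q`. -/
inductive Lit (s : Sig) (M V A : Type) : Type 1
  | pos : Tm s V → A → DTm s M V → Lit s M V A
  | neg : Tm s V → A → Lit s M V A
  | quant : DTm s M V → Set (Tm s V) → CmpOp → ℝ≥0∞ → Lit s M V A

def Lit.IsPos : Lit s M V A → Prop
  | .pos _ _ _ => True
  | _ => False

def Lit.IsNeg : Lit s M V A → Prop
  | .neg _ _ => True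
  | _ => False

def Lit.IsQuant : Lit s M V A → Prop
  | .quant _ _ _ _ => True
  | _ => False

/-- A transition rule. -/
structure Rule (s : Sig) (M V A : Type) : Type 1 where
  prem : Set (Lit s M V A)
  src : Tm s V
  lbl : A
  tgt : DTm s M V

def Rule.concLit (r : Rule s M V A) : Lit s M V A := .pos r.src r.lbl r.tgt

/-- An (open) substitution. -/
structure Subst (s : Sig) (M V : Type) : Type 1 where
  tm : V → Tm s V
  dm : M → DTm s M V

/-- A closed substitution: term variables go to closed terms, distribution variables to
discrete probability distributions on closed terms. -/
structure CSubst (s : Sig) (M V : Type) : Type where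
  tm : V → CTm s
  dm : M → PMF (CTm s)

def Lit.subst (σ : Subst s M V) : Lit s M V A → Lit s M V A
  | .pos t a θ => .pos (t.bind σ.tm) a (θ.subst σ.tm σ.dm)
  | .neg t a => .neg (t.bind σ.tm) a
  | .quant θ W c q => .quant (θ.subst σ.tm σ.dm) ((fun w => w.bind σ.tm) '' W) c q

def Rule.subst (σ : Subst s M V) (r : Rule s M V A) : Rule s M V A :=
  ⟨Lit.subst σ '' r.prem, r.src.bind σ.tm, r.lbl, r.tgt.subst σ.tm σ.dm⟩

def Lit.varsT : Lit s M V A → Set V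
  | .pos t _ θ => t.vars ∪ θ.varsT
  | .neg t _ => t.vars
  | .quant θ W _ _ => θ.varsT ∪ ⋃ w ∈ W, w.vars

def Lit.varsM : Lit s M V A → Set M
  | .pos _ _ θ => θ.varsM
  | .neg _ _ => ∅
  | .quant θ _ _ _ => θ.varsM

def Lit.IsClosed : Lit s M V A → Prop
  | .pos t _ θ => t.vars = ∅ ∧ θ.IsClosed
  | .neg t _ => t.vars = ∅
  | .quant θ W _ _ => θ.IsClosed ∧ ∀ w ∈ W, w.vars = (∅ : Set V)

def Rule.varsT (r : Rule s M V A) : Set V :=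
  r.src.vars ∪ r.tgt.varsT ∪ ⋃ l ∈ r.prem, l.varsT

def Rule.varsM (r : Rule s M V A) : Set M :=
  r.tgt.varsM ∪ ⋃ l ∈ r.prem, l.varsM

/-- Validity of a (closed) quantitative literal: since a closed literal does not depend on
the environment, we quantify universally over closed substitutions. -/
def Lit.QuantHolds : Lit s M V A → Prop
  | .quant θ W c q =>
      ∀ ρ : CSubst s M V,
        c.holds (massOf (θ.eval ρ.tm ρ.dm) ((fun w => w.bind ρ.tm) '' W)) q
  | _ => False

/-! ### Probabilistic transition system specifications -/

/-- Rules of a PTSS: positive premises target distribution variables, quantitative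
premises test sets of variables against `q ∈ [0,1]`. -/
def Rule.IsBasic (r : Rule s M V A) : Prop :=
  (∀ l ∈ r.prem, ∀ t a θ, l = Lit.pos t a θ → ∃ μ, θ = DTm.dvar μ) ∧
  (∀ l ∈ r.prem, ∀ θ W c q, l = Lit.quant θ W c q →
      (∀ w ∈ W, ∃ x, w = Tm.var x) ∧ q ≤ 1)

structure PTSS (s : Sig) (M V A : Type) : Type 1 where
  R : Set (Rule s M V A)
  basic : ∀ r ∈ R, r.IsBasic

/-- Closed positive literals (probabilistic transitions). -/
abbrev PLit (s : Sig) (A : Type) : Type := CTm s × A × PMF (CTm s)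

/-- Probabilistic transition relations. -/
abbrev TRel (s : Sig) (A : Type) : Type := Set (PLit s A)

/-- A closed substitution is proper for a set of premises if all elements of `W` of a
quantitative premise `θ(W) ⋈ q` have positive probability under the instance of `θ`. -/
def CSubst.ProperFor (ρ : CSubst s M V) (H : Set (Lit s M V A)) : Prop :=
  ∀ l ∈ H, ∀ θ W c q, l = Lit.quant θ W c q →
    ∀ w ∈ W, 0 < θ.eval ρ.tm ρ.dm (w.bind ρ.tm)

/-- Satisfaction of the closed instance (under `ρ`) of a literal by a transition
relation. -/
def Lit.SatC (τ : TRel s A) (ρ : CSubst s M V) : Lit s M V A → Prop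
  | .pos t a θ =>
      ∃ π : PMF (CTm s), ⇑π = θ.eval ρ.tm ρ.dm ∧ (t.bind ρ.tm, a, π) ∈ τ
  | .neg t a => ∀ π : PMF (CTm s), (t.bind ρ.tm, a, π) ∉ τ
  | .quant θ W c q =>
      c.holds (massOf (θ.eval ρ.tm ρ.dm) ((fun w => w.bind ρ.tm) '' W)) q

/-- The closed instance of the conclusion of `r` under `ρ` is the closed positive
literal `ψ`. -/
def Rule.Matches (r : Rule s M V A) (ρ : CSubst s M V) (ψ : PLit s A) : Prop :=
  ψ.1 = r.src.bind ρ.tm ∧ ψ.2.1 = r.lbl ∧ ⇑ψ.2.2 = r.tgt.eval ρ.tm ρ.dm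

/-- Supported model. -/
def IsSupportedModel (P : PTSS s M V A) (τ : TRel s A) : Prop :=
  ∀ ψ : PLit s A, ψ ∈ τ ↔
    ∃ r ∈ P.R, ∃ ρ : CSubst s M V,
      ρ.ProperFor r.prem ∧ r.Matches ρ ψ ∧ ∀ l ∈ r.prem, l.SatC τ ρ

/-! ### Stratifications and the associated transition relation -/

/-- The stratification conditions for a single rule. -/
def StratCond (S : PLit s A → Ordinal.{0}) (r : Rule s M V A) : Prop :=
  ∀ ρ : CSubst s M V, ρ.ProperFor r.prem →
    ∀ π : PMF (CTm s), ⇑π = r.tgt.eval ρ.tm ρ.dm →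
      (∀ l ∈ r.prem, ∀ t a θ, l = Lit.pos t a θ →
        ∀ π' : PMF (CTm s), ⇑π' = θ.eval ρ.tm ρ.dm →
          S (t.bind ρ.tm, a, π') ≤ S (r.src.bind ρ.tm, r.lbl, π)) ∧
      (∀ l ∈ r.prem, ∀ t b, l = Lit.neg t b →
        ∀ π' : PMF (CTm s),
          S (t.bind ρ.tm, b, π') < S (r.src.bind ρ.tm, r.lbl, π))

/-- The strict condition on positive premises. -/
def StratCondStrictPos (S : PLit s A → Ordinal.{0}) (r : Rule s M V A) : Prop :=
  ∀ ρ : CSubst s M V, ρ.ProperFor r.prem →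
    ∀ π : PMF (CTm s), ⇑π = r.tgt.eval ρ.tm ρ.dm →
      ∀ l ∈ r.prem, ∀ t a θ, l = Lit.pos t a θ →
        ∀ π' : PMF (CTm s), ⇑π' = θ.eval ρ.tm ρ.dm →
          S (t.bind ρ.tm, a, π') < S (r.src.bind ρ.tm, r.lbl, π)

def IsStrat (P : PTSS s M V A) (S : PLit s A → Ordinal.{0}) : Prop :=
  ∀ r ∈ P.R, StratCond S r

def IsStrictStrat (P : PTSS s M V A) (S : PLit s A → Ordinal.{0}) : Prop :=
  IsStrat P S ∧ ∀ r ∈ P.R, StratCondStrictPos S r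

/-- `D(P)`: the smallest regular cardinal bounding the cardinality of the set of
positive premises of every rule. -/
noncomputable def DP (P : PTSS s M V A) : Cardinal.{1} :=
  sInf {c : Cardinal.{1} | c.IsRegular ∧
    ∀ r ∈ P.R, Cardinal.mk {l : Lit s M V A // l ∈ r.prem ∧ l.IsPos} ≤ c}

/-- The `j`-th iteration of stratum `β`, given the union `low` of all lower strata. -/
noncomputable def stageJ (P : PTSS s M V A) (S : PLit s A → Ordinal.{0})
    (low : TRel s A) (β : Ordinal.{0}) : Ordinal.{1} → TRel s A :=
  WellFounded.fix (C := fun _ => TRel s A) (wellFounded_lt (α := Ordinal.{1}))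
    fun j rec =>
      { ψ | S ψ = β ∧ ∃ r ∈ P.R, ∃ ρ : CSubst s M V,
          ρ.ProperFor r.prem ∧ r.Matches ρ ψ ∧
          (∀ l ∈ r.prem, (l.IsPos ∨ l.IsQuant) →
            l.SatC (low ∪ ⋃ j' : {k : Ordinal.{1} // k < j}, rec j'.1 j'.2) ρ) ∧
          (∀ l ∈ r.prem, l.IsNeg → l.SatC low ρ) }

/-- The stratum `→_{P_β}`. -/
noncomputable def stratum (P : PTSS s M V A) (S : PLit s A → Ordinal.{0}) :
    Ordinal.{0} → TRel s A :=
  WellFounded.fix (C := fun _ => TRel s A) (wellFounded_lt (α := Ordinal.{0}))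
    fun β rec =>
      ⋃ j : {j : Ordinal.{1} // j ≤ (DP P).ord},
        stageJ P S (⋃ γ : {γ : Ordinal.{0} // γ < β}, rec γ.1 γ.2) β j.1

/-- The transition relation `→_{P,S}` associated with `P` based on `S`. -/
noncomputable def assocRel (P : PTSS s M V A) (S : PLit s A → Ordinal.{0}) : TRel s A :=
  ⋃ β : Ordinal.{0}, stratum P S β

/-! ### Proof structures and provable rules -/

/-- A proof structure. -/
structure PStruct (s : Sig) (M V A : Type) : Type 1 where
  B : Set (Rule s M V A)
  root : Rule s M V A
  φ : Rule s M V A → Lit s M V A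
  root_mem : root ∈ B
  vars_disj : ∀ b ∈ B, ∀ b' ∈ B, b ≠ b' →
    b.varsT ∩ b'.varsT = ∅ ∧ b.varsM ∩ b'.varsM = ∅
  φ_mem : ∀ b ∈ B, b ≠ root → (φ b).IsPos ∧ ∃ b' ∈ B, φ b ∈ b'.prem
  φ_inj : ∀ b ∈ B, ∀ b' ∈ B, b ≠ root → b' ≠ root → φ b = φ b' → b = b'
  chains_finite :
    WellFounded (fun b₂ b₁ => b₁ ∈ B ∧ b₂ ∈ B ∧ b₂ ≠ root ∧ φ b₂ ∈ b₁.prem)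

/-- `top(B,r,φ)`: premises of rules in `B` outside the image of `φ`. -/
def PStruct.top (D : PStruct s M V A) : Set (Lit s M V A) :=
  { l | (∃ b ∈ D.B, l ∈ b.prem) ∧ ∀ b ∈ D.B, b ≠ D.root → D.φ b ≠ l }

/-- A substitution matches a proof structure. -/
def PStruct.MatchedBy (D : PStruct s M V A) (σ : Subst s M V) : Prop :=
  ∀ b ∈ D.B, b ≠ D.root → (Rule.concLit b).subst σ = (D.φ b).subst σ

/-- Bijective renamings of variables. -/
def Subst.IsRenaming (σ : Subst s M V) : Prop :=
  (∃ f : V ≃ V, σ.tm = fun x => Tm.var (f x)) ∧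
  (∃ g : M ≃ M, σ.dm = fun μ => DTm.dvar (g μ))

/-- `r'` is an α-variant of `r`. -/
def AlphaEq (r r' : Rule s M V A) : Prop :=
  ∃ σ : Subst s M V, σ.IsRenaming ∧ r' = r.subst σ

/-- Provability of the rule `H/c` from a PTSS `P` via proof structures. -/
def Provable (P : PTSS s M V A) (H : Set (Lit s M V A)) (c : Lit s M V A) : Prop :=
  c ∈ H ∨
    ∃ (D : PStruct s M V A) (σ : Subst s M V),
      (∀ b ∈ D.B, ∃ r₀ ∈ P.R, AlphaEq r₀ b) ∧
      D.MatchedBy σ ∧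
      (∀ l ∈ D.top, ¬l.IsQuant → l.subst σ ∈ H) ∧
      (∀ l ∈ D.top, l.IsQuant →
        ((l.subst σ).IsClosed → (l.subst σ).QuantHolds) ∧
        (¬(l.subst σ).IsClosed → l.subst σ ∈ H)) ∧
      (Rule.concLit D.root).subst σ = c

/-- A PTSS is small if the collection of premises of each rule has cardinality at most
that of the set of variables. -/
def PTSS.Small (P : PTSS s M V A) : Prop :=
  ∀ r ∈ P.R, Cardinal.mk ↥r.prem ≤ Cardinal.lift.{1} (Cardinal.mk V)

/-- The provable closure `R⊢` of a PTSS. -/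
inductive InClosure (P : PTSS s M V A) (H : Set (Lit s M V A)) : Lit s M V A → Prop
  | base {c : Lit s M V A} (hc : c ∈ H) : InClosure P H c
  | step (r : Rule s M V A) (hr : r ∈ P.R) (σ : Subst s M V)
      (hpn : ∀ l ∈ r.prem, (l.IsPos ∨ l.IsNeg) → InClosure P H (l.subst σ))
      (hqOpen : ∀ l ∈ r.prem, l.IsQuant →
        ¬(l.subst σ).IsClosed → InClosure P H (l.subst σ))
      (hqClosed : ∀ l ∈ r.prem, l.IsQuant →
        (l.subst σ).IsClosed → (l.subst σ).QuantHolds) :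
      InClosure P H ((Rule.concLit r).subst σ)

/-! ### Well-supported proofs -/

/-- Closed literals. -/
inductive CLit (s : Sig) (A : Type) : Type
  | pos : CTm s → A → PMF (CTm s) → CLit s A
  | neg : CTm s → A → CLit s A

/-- Two closed literals deny each other. -/
def CLit.Denies : CLit s A → CLit s A → Prop
  | .pos t a _, .neg t' a' => t = t' ∧ a = a'
  | .neg t a, .pos t' a' _ => t = t' ∧ a = a'
  | _, _ => False

/-- A closed literal denies an (extended) literal. -/
def CLit.DeniesLit : CLit s A → Lit s M V A → Prop
  | .pos t a _, Lit.neg t' a' => t' = CTm.emb t ∧ a' = a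
  | .neg t a, Lit.pos t' a' _ => t' = CTm.emb t ∧ a' = a
  | _, _ => False

/-- An (extended) literal denies a closed literal. -/
def LitDeniesC : Lit s M V A → CLit s A → Prop
  | Lit.pos t' a' _, CLit.neg t a => t' = CTm.emb t ∧ a' = a
  | Lit.neg t' a', CLit.pos t a _ => t' = CTm.emb t ∧ a' = a
  | _, _ => False

/-- Well-supported provability `P ⊢_ws ψ`. -/
inductive WSProv (P : PTSS s M V A) : CLit s A → Prop
  | pos (r : Rule s M V A) (hr : r ∈ P.R) (ρ : CSubst s M V)
      (hp : ρ.ProperFor r.prem)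
      (π : PMF (CTm s)) (hπ : ⇑π = r.tgt.eval ρ.tm ρ.dm)
      (hq : ∀ l ∈ r.prem, ∀ θ W c q, l = Lit.quant θ W c q →
        c.holds (massOf (θ.eval ρ.tm ρ.dm) ((fun w => w.bind ρ.tm) '' W)) q)
      (hpos : ∀ l ∈ r.prem, ∀ t a μ, l = Lit.pos t a (DTm.dvar μ) →
        WSProv P (.pos (t.bind ρ.tm) a (ρ.dm μ)))
      (hneg : ∀ l ∈ r.prem, ∀ t b, l = Lit.neg t b →
        WSProv P (.neg (t.bind ρ.tm) b)) :
      WSProv P (.pos (r.src.bind ρ.tm) r.lbl π)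
  | neg (t : CTm s) (a : A) (K : Set (CLit s A))
      (hK : ∀ χ ∈ K, WSProv P χ)
      (hden : ∀ (N : Set (Lit s M V A)) (φ : Lit s M V A),
        Provable P N φ → φ.IsClosed → LitDeniesC φ (.neg t a) →
        ∃ χ ∈ K, ∃ l ∈ N, χ.DeniesLit l) :
      WSProv P (.neg t a)

def PTSS.Complete (P : PTSS s M V A) : Prop :=
  ∀ (t : CTm s) (a : A), (∃ π, WSProv P (.pos t a π)) ∨ WSProv P (.neg t a)

def PTSS.Consistent (P : PTSS s M V A) : Prop :=
  ∀ χ χ' : CLit s A, WSProv P χ → WSProv P χ' → ¬χ.Denies χ'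

/-- A transition relation satisfies a closed literal. -/
def CLit.SatBy (τ : TRel s A) : CLit s A → Prop
  | .pos t a π => (t, a, π) ∈ τ
  | .neg t a => ∀ π : PMF (CTm s), (t, a, π) ∉ τ

/-! ### Bisimulation -/

def RClosedSet (Rel : CTm s → CTm s → Prop) (Q : Set (CTm s)) : Prop :=
  ∀ t ∈ Q, ∀ t', Rel t t' → t' ∈ Q

/-- Lifting of a relation on closed terms to distributions. -/
def liftRel (Rel : CTm s → CTm s → Prop) (π π' : PMF (CTm s)) : Prop :=
  ∀ Q : Set (CTm s), RClosedSet Rel Q → massOf (⇑π) Q = massOf (⇑π') Q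

def IsBisimulation (τ : TRel s A) (Rel : CTm s → CTm s → Prop) : Prop :=
  Symmetric Rel ∧
  ∀ t t' a π, Rel t t' → (t, a, π) ∈ τ →
    ∃ π', (t', a, π') ∈ τ ∧ liftRel Rel π π'

/-- Bisimilarity: the smallest relation including all bisimulations. -/
def Bisim (τ : TRel s A) (t t' : CTm s) : Prop :=
  ∃ Rel, IsBisimulation τ Rel ∧ Rel t t'

/-! ### Rule formats -/

/-- Renaming of the tuple-variable placeholders by a tuple `z` from the diagonal set. -/
def zren {L : Type} (z : L → V) : L ⊕ V → Tm s V
  | .inl l => .var (z l)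
  | .inr v => .var v

/-- The shape and conditions on the premises of an `ntμfθ`/`ntμxθ` rule, parameterized
by the set `xs` of binding variables of the source of the conclusion. -/
def Rule.PremFormat (r : Rule s M V A) (xs : Set V) : Prop :=
  ∃ (Mi Ni L : Type) (Kl : L → Type)
    (tm : Mi → Tm s (L ⊕ V)) (am : Mi → A)
    (tn : Ni → Tm s (L ⊕ V)) (bn : Ni → A)
    (θl : L → DTm s M V) (cmp : (l : L) → Kl l → CmpOp) (p : (l : L) → Kl l → ℝ≥0∞)
    (Y : L → Set V) (Wv : Set V) (Z : Set (L → V)) (μ : Mi → (L → V) → M),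
    -- the premises are exactly as prescribed by the format
    r.prem =
      (⋃ m : Mi, ⋃ z ∈ Z,
        {Lit.pos ((tm m).bind (zren z)) (am m) (DTm.dvar (μ m z))}) ∪
      (⋃ n : Ni, ⋃ z ∈ Z, {Lit.neg ((tn n).bind (zren z)) (bn n)}) ∪
      (⋃ l : L, ⋃ k : Kl l,
        {Lit.quant (θl l) (Tm.var '' (Y l)) (cmp l k) (p l k)}) ∧
    -- quantitative comparisons are `>`, `≥` with bounds in [0,1]
    (∀ l k, cmp l k = CmpOp.gt ∨ cmp l k = CmpOp.ge) ∧
    (∀ l k, p l k ≤ 1) ∧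
    -- condition 1
    (∀ l, Cardinal.aleph0 ≤ Cardinal.mk (Y l)) ∧
    (∀ l : L, Cardinal.mk L < Cardinal.mk (Y l)) ∧
    -- condition 2: Z is a diagonal set over the Yₗ, extra variables from Wv
    (∀ w ∈ Wv, ∀ l, w ∉ Y l) ∧
    (∀ z ∈ Z, ∀ l, z l ∈ Y l) ∧
    (∀ l, ∀ y ∈ Y l, ∃ z ∈ Z, z l = y) ∧
    (∀ z ∈ Z, ∀ z' ∈ Z, (∃ l, z l = z' l) → z = z') ∧
    (∀ m, ∀ v : V, Sum.inr v ∈ (tm m).vars → v ∈ Wv) ∧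
    (∀ n, ∀ v : V, Sum.inr v ∈ (tn n).vars → v ∈ Wv) ∧
    -- condition 3: all the μ's are different
    (∀ m z m' z', z ∈ Z → z' ∈ Z → μ m z = μ m' z' → m = m' ∧ z = z') ∧
    -- condition 4: symmetry condition on occurrences in θ and the θₗ
    (∀ m, ∀ z ∈ Z, ∀ z' ∈ Z,
      μ m z ∈ r.tgt.varsM ∪ ⋃ l, (θl l).varsM →
      μ m z' ∈ r.tgt.varsM ∪ ⋃ l, (θl l).varsM → z = z') ∧
    -- condition 5
    (∀ l, Y l ∩ xs = ∅) ∧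
    (∀ l l', l ≠ l' → Y l ∩ Y l' = ∅) ∧
    -- condition 7
    (∀ l, (θl l).varsT ∩ (xs ∪ ⋃ l', Y l') = ∅)

/-- The `ntμfθ` format. -/
def Rule.IsNTF (r : Rule s M V A) : Prop :=
  ∃ (f : s.F) (x : Fin (s.ar f) → V),
    Function.Injective x ∧
    r.src = Tm.app f (fun i => Tm.var (x i)) ∧
    r.PremFormat (Set.range x)

/-- The `ntμxθ` format. -/
def Rule.IsNTX (r : Rule s M V A) : Prop :=
  ∃ x₀ : V, r.src = Tm.var x₀ ∧ r.PremFormat {x₀}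

/-- The `nxμfθ` format: `ntμfθ` where the sources of positive premises are variables. -/
def Rule.IsNXF (r : Rule s M V A) : Prop :=
  r.IsNTF ∧ ∀ l ∈ r.prem, ∀ t a θ, l = Lit.pos t a θ → ∃ v, t = Tm.var v

/-- Rules whose positive premises have a variable source and a distribution-variable
target (`nxμtθ`). -/
def NxMuTPrem (H : Set (Lit s M V A)) : Prop :=
  ∀ l ∈ H, ∀ t a θ, l = Lit.pos t a θ →
    (∃ v, t = Tm.var v) ∧ ∃ μ, θ = DTm.dvar μ

/-- The edge relation of the variable dependency graph of the positive and quantitative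
premises of a rule. -/
def Rule.depEdge (r : Rule s M V A) : (V ⊕ M) → (V ⊕ M) → Prop := fun u w =>
  (∃ l ∈ r.prem, ∃ t a θ, l = Lit.pos t a θ ∧
    (∃ x ∈ Tm.vars t, u = Sum.inl x) ∧ (∃ μ ∈ DTm.varsM θ, w = Sum.inr μ)) ∨
  (∃ l ∈ r.prem, ∃ θ W c q, l = Lit.quant θ W c q ∧
    ((∃ x ∈ DTm.varsT θ, u = Sum.inl x) ∨ (∃ μ ∈ DTm.varsM θ, u = Sum.inr μ)) ∧
    (∃ y, w = Sum.inl y ∧ Tm.var y ∈ W))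

/-- A rule is well-founded if every backward chain of edges in its variable dependency
graph is finite. -/
def Rule.WFR (r : Rule s M V A) : Prop := WellFounded r.depEdge

/-- No free variables: every term variable occurring in the rule occurs in the source of
the conclusion or in a set `W` of a quantitative premise, and every distribution variable
occurs as the target of a positive premise. -/
def Rule.NoFree (r : Rule s M V A) : Prop :=
  (∀ x ∈ r.varsT, x ∈ r.src.vars ∨
    ∃ l ∈ r.prem, ∃ θ W c q, l = Lit.quant θ W c q ∧ Tm.var x ∈ W) ∧
  (∀ μ ∈ r.varsM, ∃ l ∈ r.prem, ∃ t a, l = Lit.pos t a (DTm.dvar μ))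

/-- The pntree format: well-founded `nxμfθ` rules without free variables. -/
def Rule.IsPntree (r : Rule s M V A) : Prop := r.IsNXF ∧ r.WFR ∧ r.NoFree

/-! ### Composition and iteration of substitutions -/

def Subst.comp (σ τ : Subst s M V) : Subst s M V :=
  ⟨fun x => (τ.tm x).bind σ.tm, fun μ => (τ.dm μ).subst σ.tm σ.dm⟩

def Subst.iter (ρ : Subst s M V) : ℕ → Subst s M V
  | 0 => ⟨Tm.var, DTm.dvar⟩
  | n + 1 => ρ.comp (ρ.iter n)

/-- A unifier for a substitution. -/
def Subst.Unifies (σ ρ : Subst s M V) : Prop := σ.comp ρ = σ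

/-! ### Pushforward products of distributions -/

/-- The pushforward `(∏ᵢ πᵢ) ∘ g⁻¹` as a mass function on closed terms. -/
noncomputable def pushMass {n : ℕ} (g : (Fin n → CTm s) → CTm s)
    (π : Fin n → PMF (CTm s)) : CTm s → ℝ≥0∞ :=
  fun u => ∑' v : Fin n → CTm s, (if g v = u then ∏ k, π k (v k) else 0)

/-! ### Auxiliary lemmas for Statement 2 -/

/-- `G P low ψ`: `ψ` is derivable with all premises checked against `low`. -/
def GG (P : PTSS s M V A) (low : TRel s A) (ψ : PLit s A) : Prop :=
  ∃ r ∈ P.R, ∃ ρ : CSubst s M V,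
    ρ.ProperFor r.prem ∧ r.Matches ρ ψ ∧ ∀ l ∈ r.prem, l.SatC low ρ

lemma stageJ_eq (P : PTSS s M V A) (S : PLit s A → Ordinal.{0})
    (low : TRel s A) (β : Ordinal.{0}) (j : Ordinal.{1}) :
    stageJ P S low β j =
      { ψ | S ψ = β ∧ ∃ r ∈ P.R, ∃ ρ : CSubst s M V,
          ρ.ProperFor r.prem ∧ r.Matches ρ ψ ∧
          (∀ l ∈ r.prem, (l.IsPos ∨ l.IsQuant) →
            l.SatC (low ∪ ⋃ j' : {k : Ordinal.{1} // k < j}, stageJ P S low β j'.1) ρ) ∧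
          (∀ l ∈ r.prem, l.IsNeg → l.SatC low ρ) } :=
  WellFounded.fix_eq _ _ j

lemma matches_eta {r : Rule s M V A} {ρ : CSubst s M V} {ψ : PLit s A}
    (hmatch : r.Matches ρ ψ) : ψ = (r.src.bind ρ.tm, r.lbl, ψ.2.2) :=
  Prod.ext hmatch.1 (Prod.ext hmatch.2.1 rfl)

lemma stageJ_char (P : PTSS s M V A) (S : PLit s A → Ordinal.{0})
    (hS : IsStrictStrat P S) (low : TRel s A) (β : Ordinal.{0}) (j : Ordinal.{1}) :
    stageJ P S low β j = { ψ | S ψ = β ∧ GG P low ψ } := by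
  induction j using Ordinal.induction with
  | h j IH =>
    rw [stageJ_eq]
    ext ψ
    constructor
    · rintro ⟨hSψ, r, hr, ρ, hprop, hmatch, hpq, hneg⟩
      refine ⟨hSψ, r, hr, ρ, hprop, hmatch, ?_⟩
      have hψeq := matches_eta hmatch
      intro l hl
      cases l with
      | pos t a θ =>
        obtain ⟨π, hπ, hmem⟩ := hpq _ hl (Or.inl trivial)
        refine ⟨π, hπ, ?_⟩
        rcases hmem with h | h
        · exact h
        · exfalso
          have hlt : S (t.bind ρ.tm, a, π) < S ψ := by
            rw [hψeq]
            exact hS.2 r hr ρ hprop ψ.2.2 hmatch.2.2 _ hl t a θ rfl π hπ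
          have hXβ : S (t.bind ρ.tm, a, π) = β := by
            simp only [Set.mem_iUnion] at h
            obtain ⟨⟨j', hj'⟩, hmem'⟩ := h
            rw [IH j' hj'] at hmem'
            exact hmem'.1
          rw [hXβ, hSψ] at hlt
          exact lt_irrefl _ hlt
      | neg t a => exact hneg _ hl trivial
      | quant θ W c q => exact hpq _ hl (Or.inr trivial)
    · rintro ⟨hSψ, r, hr, ρ, hprop, hmatch, hsat⟩
      refine ⟨hSψ, r, hr, ρ, hprop, hmatch, ?_, ?_⟩
      · intro l hl h
        cases l with
        | pos t a θ =>
          obtain ⟨π, hπ, hmem⟩ := hsat _ hl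
          exact ⟨π, hπ, Or.inl hmem⟩
        | neg t a => rcases h with h | h <;> exact h.elim
        | quant θ W c q => exact hsat _ hl
      · intro l hl h
        cases l with
        | pos t a θ => exact h.elim
        | neg t a => exact hsat _ hl
        | quant θ W c q => exact h.elim

lemma stratum_eq (P : PTSS s M V A) (S : PLit s A → Ordinal.{0}) (β : Ordinal.{0}) :
    stratum P S β =
      ⋃ j : {j : Ordinal.{1} // j ≤ (DP P).ord},
        stageJ P S (⋃ γ : {γ : Ordinal.{0} // γ < β}, stratum P S γ.1) β j.1 :=
  WellFounded.fix_eq _ _ β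

lemma stratum_char (P : PTSS s M V A) (S : PLit s A → Ordinal.{0})
    (hS : IsStrictStrat P S) (β : Ordinal.{0}) :
    stratum P S β =
      { ψ | S ψ = β ∧ GG P (⋃ γ : {γ : Ordinal.{0} // γ < β}, stratum P S γ.1) ψ } := by
  rw [stratum_eq]
  ext ψ
  simp only [Set.mem_iUnion]
  constructor
  · rintro ⟨j, hmem⟩
    rwa [stageJ_char P S hS] at hmem
  · intro h
    exact ⟨⟨0, zero_le⟩, by rwa [stageJ_char P S hS]⟩

lemma stratum_S (P : PTSS s M V A) (S : PLit s A → Ordinal.{0})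
    (hS : IsStrictStrat P S) {β : Ordinal.{0}} {ψ : PLit s A}
    (h : ψ ∈ stratum P S β) : S ψ = β := by
  rw [stratum_char P S hS] at h
  exact h.1

lemma low_eq (P : PTSS s M V A) (S : PLit s A → Ordinal.{0})
    (hS : IsStrictStrat P S) (β : Ordinal.{0}) :
    (⋃ γ : {γ : Ordinal.{0} // γ < β}, stratum P S γ.1) =
      {ψ' | ψ' ∈ assocRel P S ∧ S ψ' < β} := by
  ext ψ'
  simp only [Set.mem_iUnion, Set.mem_setOf_eq, assocRel]
  constructor
  · rintro ⟨⟨γ, hγ⟩, h⟩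
    refine ⟨⟨γ, h⟩, ?_⟩
    rw [stratum_S P S hS h]
    exact hγ
  · rintro ⟨h1, h2⟩
    obtain ⟨γ, h⟩ := h1
    have hγ : γ = S ψ' := (stratum_S P S hS h).symm
    exact ⟨⟨γ, by rw [hγ]; exact h2⟩, h⟩

lemma mem_assocRel_iff (P : PTSS s M V A) (S : PLit s A → Ordinal.{0})
    (hS : IsStrictStrat P S) (ψ : PLit s A) :
    ψ ∈ assocRel P S ↔ GG P {ψ' | ψ' ∈ assocRel P S ∧ S ψ' < S ψ} ψ := by
  constructor
  · intro h
    obtain ⟨β, hβ⟩ := Set.mem_iUnion.1 h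
    have hβψ : S ψ = β := stratum_S P S hS hβ
    subst hβψ
    rw [stratum_char P S hS, low_eq P S hS] at hβ
    exact hβ.2
  · intro h
    have : ψ ∈ stratum P S (S ψ) := by
      rw [stratum_char P S hS, low_eq P S hS]
      exact ⟨rfl, h⟩
    exact Set.mem_iUnion.2 ⟨S ψ, this⟩

/-- Transfer of premise satisfaction between relations agreeing strictly below
the stratum of the conclusion. -/
lemma sat_transfer (P : PTSS s M V A) (S : PLit s A → Ordinal.{0})
    (hS : IsStrictStrat P S) (τ₁ τ₂ : TRel s A)
    {r : Rule s M V A} (hr : r ∈ P.R) {ρ : CSubst s M V}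
    (hprop : ρ.ProperFor r.prem) {ψ : PLit s A} (hmatch : r.Matches ρ ψ)
    (hagree : ∀ ψ', S ψ' < S ψ → (ψ' ∈ τ₁ ↔ ψ' ∈ τ₂))
    (hsat : ∀ l ∈ r.prem, l.SatC τ₁ ρ) : ∀ l ∈ r.prem, l.SatC τ₂ ρ := by
  have hψeq := matches_eta hmatch
  intro l hl
  cases l with
  | pos t a θ =>
    obtain ⟨π, hπ, hmem⟩ := hsat _ hl
    have hlt : S (t.bind ρ.tm, a, π) < S ψ := by
      rw [hψeq]
      exact hS.2 r hr ρ hprop ψ.2.2 hmatch.2.2 _ hl t a θ rfl π hπ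
    exact ⟨π, hπ, (hagree _ hlt).1 hmem⟩
  | neg t a =>
    intro π hmem
    have hlt : S (t.bind ρ.tm, a, π) < S ψ := by
      rw [hψeq]
      exact (hS.1 r hr ρ hprop ψ.2.2 hmatch.2.2).2 _ hl t a rfl π
    exact hsat _ hl π ((hagree _ hlt).2 hmem)
  | quant θ W c q => exact hsat _ hl

/-- if `S` is a strict stratification of `P`, then `→_{P,S}` is the only
supported model of `P`. -/
theorem unique_supported_model_of_strict_stratification
    (s : Sig) (M V A : Type) [Infinite V] [Infinite M]
    (P : PTSS s M V A) (S : PLit s A → Ordinal.{0}) (hS : IsStrictStrat P S) :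
    IsSupportedModel P (assocRel P S) ∧
    ∀ τ : TRel s A, IsSupportedModel P τ → τ = assocRel P S := by
  have hmodel : IsSupportedModel P (assocRel P S) := by
    intro ψ
    rw [mem_assocRel_iff P S hS]
    constructor
    · rintro ⟨r, hr, ρ, hprop, hmatch, hsat⟩
      refine ⟨r, hr, ρ, hprop, hmatch, ?_⟩
      refine sat_transfer P S hS _ _ hr hprop hmatch ?_ hsat
      intro ψ' hlt
      exact ⟨fun h => h.1, fun h => ⟨h, hlt⟩⟩
    · rintro ⟨r, hr, ρ, hprop, hmatch, hsat⟩
      refine ⟨r, hr, ρ, hprop, hmatch, ?_⟩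
      refine sat_transfer P S hS _ _ hr hprop hmatch ?_ hsat
      intro ψ' hlt
      exact ⟨fun h => ⟨h, hlt⟩, fun h => h.1⟩
  refine ⟨hmodel, ?_⟩
  intro τ hτ
  have key : ∀ β : Ordinal.{0}, ∀ ψ : PLit s A, S ψ = β →
      (ψ ∈ τ ↔ ψ ∈ assocRel P S) := by
    intro β
    induction β using Ordinal.induction with
    | h β IH =>
      intro ψ hβ
      rw [hτ ψ, hmodel ψ]
      constructor
      · rintro ⟨r, hr, ρ, hprop, hmatch, hsat⟩
        refine ⟨r, hr, ρ, hprop, hmatch, ?_⟩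
        refine sat_transfer P S hS _ _ hr hprop hmatch ?_ hsat
        intro ψ' hlt
        rw [hβ] at hlt
        exact IH _ hlt _ rfl
      · rintro ⟨r, hr, ρ, hprop, hmatch, hsat⟩
        refine ⟨r, hr, ρ, hprop, hmatch, ?_⟩
        refine sat_transfer P S hS _ _ hr hprop hmatch ?_ hsat
        intro ψ' hlt
        rw [hβ] at hlt
        exact (IH _ hlt _ rfl).symm
  exact Set.ext fun ψ => key (S ψ) ψ rfl

end PTSSpec
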